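/- Let p, q be coprime positive integers and let p', q' be integers with p·p' + q·q' = 1. Define f : ℂ → ℂ² by f(0) = (0,0) and, for z = r·e^{iθ} with r > 0, f(z) = (r^{1/(2p)}·e^{i p' θ}, r^{1/(2q)}·e^{i q' θ}) (using any choice of argument θ of z; the formula is well defined). Then f is continuous on ℂ and satisfies f₁(z)^p · f₂(z)^q = z for all z ∈ ℂ, i.e. f is a continuous global section of the map h(z,w) = z^p w^q. -/

import Mathlib

open Complex

lemma exp_arg_zpow (z : ℂ) (hz : z ≠ 0) (n : ℤ) :
    Complex.exp (Complex.I * n * Complex.arg z) = (z / (‖z‖ : ℂ)) ^ n := by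
  have habs : (‖z‖ : ℂ) ≠ 0 := by
    exact_mod_cast (norm_ne_zero_iff.mpr hz)
  have hz' : z / (‖z‖ : ℂ) = Complex.exp (z.arg * Complex.I) := by
    rw [div_eq_iff habs, mul_comm]
    exact (Complex.norm_mul_exp_arg_mul_I z).symm
  rw [hz', ← Complex.exp_int_mul]
  ring_nf

lemma cont_aux (m : ℕ) (hm : 0 < m) (n : ℤ) :
    Continuous (fun z : ℂ =>
      ((‖z‖ ^ ((1 : ℝ) / (2 * m)) : ℝ) : ℂ) * (z / (‖z‖ : ℂ)) ^ n) := by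
  have hexp : (0 : ℝ) < (1 : ℝ) / (2 * m) := by positivity
  have hrpow : Continuous (fun z : ℂ => (‖z‖ ^ ((1 : ℝ) / (2 * m)) : ℝ)) := by
    rw [continuous_iff_continuousAt]
    intro z
    exact (Real.continuousAt_rpow_const _ _ (Or.inr hexp.le)).comp
      continuous_norm.continuousAt
  rw [continuous_iff_continuousAt]
  intro z₀
  by_cases hz₀ : z₀ = 0
  · subst hz₀
    rw [ContinuousAt]
    have h0 : ((‖(0:ℂ)‖ ^ ((1 : ℝ) / (2 * m)) : ℝ) : ℂ) *
        ((0:ℂ) / (‖(0:ℂ)‖ : ℂ)) ^ n = 0 := by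
      rw [norm_zero, Real.zero_rpow hexp.ne']
      simp
    rw [h0]
    apply squeeze_zero_norm (a := fun z : ℂ => ‖z‖ ^ ((1 : ℝ) / (2 * m)))
    · intro z
      by_cases hz : z = 0
      · rw [hz, h0, norm_zero]
        positivity
      · have habs : ‖z‖ ≠ 0 := norm_ne_zero_iff.mpr hz
        have h1 : ‖z / (‖z‖ : ℂ)‖ = 1 := by
          simp [norm_div, habs]
        rw [norm_mul, norm_zpow]
        rw [h1, one_zpow, mul_one, Complex.norm_real, Real.norm_eq_abs]
        exact le_of_eq (_root_.abs_of_nonneg (Real.rpow_nonneg (norm_nonneg z) _))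
    · simpa only [norm_zero, Real.zero_rpow hexp.ne'] using hrpow.tendsto 0
  · have habs : (‖z₀‖ : ℂ) ≠ 0 := by
      exact_mod_cast norm_ne_zero_iff.mpr hz₀
    have hdiv : ContinuousAt (fun z : ℂ => z / (‖z‖ : ℂ)) z₀ :=
      continuousAt_id.div (Complex.continuous_ofReal.comp continuous_norm).continuousAt
        habs
    have hne : z₀ / (‖z₀‖ : ℂ) ≠ 0 := by
      simp [div_ne_zero, hz₀, habs]
    exact ((Complex.continuous_ofReal.comp hrpow).continuousAt).mul
      (hdiv.zpow₀ n (Or.inl hne))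

/-- The Hölder-continuous section of `h(z,w) = z^p w^q`:
`f(r e^{iθ}) = (r^{1/(2p)} e^{i p' θ}, r^{1/(2q)} e^{i q' θ})`, `f(0) = (0,0)`. -/
theorem holder_continuous_section_of_zp_wq
    (p q : ℕ) (hp : 0 < p) (hq : 0 < q) (hpq : Nat.Coprime p q)
    (p' q' : ℤ) (hbezout : (p : ℤ) * p' + (q : ℤ) * q' = 1)
    (f : ℂ → ℂ × ℂ)
    (hf0 : f 0 = (0, 0))
    (hf : ∀ z : ℂ, z ≠ 0 →
      f z = (((‖z‖ ^ ((1 : ℝ) / (2 * p)) : ℝ) : ℂ) *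
               Complex.exp (Complex.I * p' * Complex.arg z),
             ((‖z‖ ^ ((1 : ℝ) / (2 * q)) : ℝ) : ℂ) *
               Complex.exp (Complex.I * q' * Complex.arg z))) :
    Continuous f ∧ ∀ z : ℂ, (f z).1 ^ p * (f z).2 ^ q = z := by
  have hfg : f = fun z =>
      (((‖z‖ ^ ((1 : ℝ) / (2 * p)) : ℝ) : ℂ) * (z / (‖z‖ : ℂ)) ^ p',
       ((‖z‖ ^ ((1 : ℝ) / (2 * q)) : ℝ) : ℂ) * (z / (‖z‖ : ℂ)) ^ q') := by
    funext z
    by_cases hz : z = 0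
    · subst hz
      have hp' : ((1 : ℝ) / (2 * p)) ≠ 0 := by positivity
      have hq' : ((1 : ℝ) / (2 * q)) ≠ 0 := by positivity
      rw [hf0]
      rw [norm_zero, Real.zero_rpow hp', Real.zero_rpow hq']
      simp
    · rw [hf z hz, exp_arg_zpow z hz p', exp_arg_zpow z hz q']
  constructor
  · rw [hfg]
    exact (cont_aux p hp p').prodMk (cont_aux q hq q')
  · intro z
    by_cases hz : z = 0
    · subst hz
      simp [hf0, zero_pow hp.ne']
    · rw [hf z hz]
      simp only
      have habs0 : (0:ℝ) < ‖z‖ := norm_pos_iff.mpr hz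
      have h1 : ((‖z‖ ^ ((1 : ℝ) / (2 * p)) : ℝ) : ℂ) ^ p =
          ((‖z‖ ^ ((1 : ℝ) / 2) : ℝ) : ℂ) := by
        rw [← Complex.ofReal_pow, ← Real.rpow_natCast (‖z‖ ^ _) p,
          ← Real.rpow_mul habs0.le]
        congr 2
        field_simp
      have h2 : ((‖z‖ ^ ((1 : ℝ) / (2 * q)) : ℝ) : ℂ) ^ q =
          ((‖z‖ ^ ((1 : ℝ) / 2) : ℝ) : ℂ) := by
        rw [← Complex.ofReal_pow, ← Real.rpow_natCast (‖z‖ ^ _) q,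
          ← Real.rpow_mul habs0.le]
        congr 2
        field_simp
      have hE1 : Complex.exp (Complex.I * p' * z.arg) ^ p =
          Complex.exp ((p : ℂ) * (Complex.I * p' * z.arg)) := (Complex.exp_nat_mul _ p).symm
      have hE2 : Complex.exp (Complex.I * q' * z.arg) ^ q =
          Complex.exp ((q : ℂ) * (Complex.I * q' * z.arg)) := (Complex.exp_nat_mul _ q).symm
      rw [mul_pow, mul_pow, h1, h2, hE1, hE2]
      have hbez : (p : ℂ) * p' + (q : ℂ) * q' = 1 := by exact_mod_cast hbezout
      have hexp : (p : ℂ) * (Complex.I * p' * z.arg) + (q : ℂ) * (Complex.I * q' * z.arg) =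
          z.arg * Complex.I := by
        linear_combination (Complex.I * (z.arg : ℂ)) * hbez
      have hr : ((‖z‖ ^ ((1 : ℝ) / 2) : ℝ) : ℂ) *
          ((‖z‖ ^ ((1 : ℝ) / 2) : ℝ) : ℂ) = (‖z‖ : ℂ) := by
        rw [← Complex.ofReal_mul, ← Real.rpow_add habs0]
        norm_num
      calc ((‖z‖ ^ ((1 : ℝ) / 2) : ℝ) : ℂ) *
            Complex.exp ((p : ℂ) * (Complex.I * p' * z.arg)) *
            (((‖z‖ ^ ((1 : ℝ) / 2) : ℝ) : ℂ) *
            Complex.exp ((q : ℂ) * (Complex.I * q' * z.arg)))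
          = (((‖z‖ ^ ((1 : ℝ) / 2) : ℝ) : ℂ) *
            ((‖z‖ ^ ((1 : ℝ) / 2) : ℝ) : ℂ)) *
            (Complex.exp ((p : ℂ) * (Complex.I * p' * z.arg)) *
             Complex.exp ((q : ℂ) * (Complex.I * q' * z.arg))) := by ring
        _ = (‖z‖ : ℂ) * Complex.exp (z.arg * Complex.I) := by
            rw [hr, ← Complex.exp_add, hexp]
        _ = z := Complex.norm_mul_exp_arg_mul_I z
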